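/- For the system of independent r_j-random walks starting from each point of Ω_M, for all n, L ≥ 0: P(|ρ| ≤ L)^{2n−1} · n · P(|ρ| > L) · M^L ≤ Var N_n(L) ≤ 2 M^L. -/

import Mathlib

open MeasureTheory Filter
open scoped ENNReal NNReal BigOperators Topology

noncomputable section

/-- The hierarchical group of order `M`: finitely supported sequences with entries in `ZMod M`,
with componentwise addition mod `M`. -/
abbrev Omega (M : ℕ) := ℕ →₀ ZMod M

/-- The hierarchical norm: `|x| = max {i : x_i ≠ 0}` (coordinates indexed from 1), `|0| = 0`. -/
def hnorm {M : ℕ} (x : Omega M) : ℕ := x.support.sup (· + 1)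

instance {M : ℕ} : MeasurableSpace (Omega M) := ⊤

/-- The `n`-step distribution of the random walk with step distribution `ρ`, started at `0`. -/
def walk {M : ℕ} (ρ : PMF (Omega M)) : ℕ → PMF (Omega M)
  | 0 => PMF.pure 0
  | n + 1 => (walk ρ n).bind fun x => ρ.map (x + ·)

lemma meas {M : ℕ} (s : Set (Omega M)) : MeasurableSet s :=
  MeasurableSpace.measurableSet_top

lemma measf {M : ℕ} (f : Omega M → Omega M) : Measurable f := fun _ _ => meas _

lemma hnorm_le_iff {M L : ℕ} {x : Omega M} : hnorm x ≤ L ↔ ∀ i, L ≤ i → x i = 0 := by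
  unfold hnorm
  rw [Finset.sup_le_iff]
  constructor
  · intro h i hi
    by_contra hx
    have := h i (Finsupp.mem_support_iff.2 hx)
    omega
  · intro h i hi
    rw [Finsupp.mem_support_iff] at hi
    by_contra hL
    exact hi (h i (by omega))

lemma hnorm_zero {M : ℕ} : hnorm (0 : Omega M) = 0 := by simp [hnorm]

lemma hnorm_add_le {M L : ℕ} {x y : Omega M} (hx : hnorm x ≤ L) (hy : hnorm y ≤ L) :
    hnorm (x + y) ≤ L := by
  rw [hnorm_le_iff] at *
  intro i hi
  simp [Finsupp.add_apply, hx i hi, hy i hi]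

lemma hnorm_neg {M L : ℕ} {x : Omega M} (hx : hnorm x ≤ L) : hnorm (-x) ≤ L := by
  rw [hnorm_le_iff] at *
  intro i hi
  simp [Finsupp.neg_apply, hx i hi]

lemma hnorm_add_iff {M L : ℕ} {x : Omega M} (hx : hnorm x ≤ L) (y : Omega M) :
    hnorm (x + y) ≤ L ↔ hnorm y ≤ L := by
  constructor
  · intro h
    have : y = -x + (x + y) := by abel
    rw [this]
    exact hnorm_add_le (hnorm_neg hx) h
  · exact fun h => hnorm_add_le hx h

lemma hnorm_add_big {M L : ℕ} {x y : Omega M} (hy : hnorm y ≤ L) (hx : L < hnorm x) :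
    L < hnorm (x + y) := by
  obtain ⟨i, hi, hxi⟩ : ∃ i, L ≤ i ∧ x i ≠ 0 := by
    by_contra h
    push_neg at h
    exact absurd (hnorm_le_iff.2 fun i hi => by
      by_contra hc; exact hc (h i hi)) (not_le.2 hx)
  have hyi : y i = 0 := hnorm_le_iff.1 hy i hi
  have : (x + y) i ≠ 0 := by simp [Finsupp.add_apply, hyi, hxi]
  have hmem : i ∈ (x + y).support := Finsupp.mem_support_iff.2 this
  have : i + 1 ≤ hnorm (x + y) := Finset.le_sup (f := (· + 1)) hmem
  omega

lemma card_key {M L : ℕ} (hM : 2 ≤ M) :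
    ∑' u : Omega M, (if hnorm u ≤ L then (1 : ℝ≥0∞) else 0) = (M : ℝ≥0∞) ^ L := by
  have : NeZero M := ⟨by omega⟩
  have h1 : ∑' u : Omega M, (if hnorm u ≤ L then (1 : ℝ≥0∞) else 0)
      = ∑' u : {u : Omega M | hnorm u ≤ L}, (1 : ℝ≥0∞) := by
    rw [tsum_subtype {u : Omega M | hnorm u ≤ L} (fun _ => (1 : ℝ≥0∞))]
    refine tsum_congr fun u => ?_
    simp [Set.indicator_apply, Set.mem_setOf_eq]
  rw [h1]
  have e1 : {u : Omega M // hnorm u ≤ L} ≃ {u : Omega M // ↑u.support ⊆ {i : ℕ | i < L}} := by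
    refine Equiv.subtypeEquivRight fun u => ?_
    rw [hnorm_le_iff]
    constructor
    · intro h i hi
      simp only [Finset.mem_coe, Finsupp.mem_support_iff] at hi
      simp only [Set.mem_setOf_eq]
      by_contra hc
      exact hi (h i (by omega))
    · intro h i hi
      by_contra hc
      have := h (Finsupp.mem_support_iff.2 hc)
      simp only [Set.mem_setOf_eq] at this
      omega
  have e2 := Finsupp.restrictSupportEquiv {i : ℕ | i < L} (ZMod M)
  have e3 : ({i : ℕ | i < L} →₀ ZMod M) ≃ (Fin L →₀ ZMod M) :=
    Finsupp.equivCongrLeft Fin.equivSubtype.symm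
  have e4 : (Fin L →₀ ZMod M) ≃ (Fin L → ZMod M) := Finsupp.equivFunOnFinite
  have e : {u : Omega M | hnorm u ≤ L} ≃ (Fin L → ZMod M) :=
    ((e1.trans e2).trans e3).trans e4
  rw [← e.symm.tsum_eq (fun _ => (1 : ℝ≥0∞))]
  rw [tsum_fintype]
  simp [Finset.card_univ, ZMod.card]

open Classical in
lemma pmf_meas {M : ℕ} (μ : PMF (Omega M)) (s : Set (Omega M)) :
    μ.toMeasure s = ∑' x, if x ∈ s then μ x else 0 := by
  rw [PMF.toMeasure_apply μ (meas s)]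
  exact tsum_congr fun x => Set.indicator_apply s μ x

lemma walk_succ_measure {M : ℕ} (ρ : PMF (Omega M)) (n : ℕ) (s : Set (Omega M)) :
    (walk ρ (n + 1)).toMeasure s
      = ∑' x, (walk ρ n) x * ρ.toMeasure ((x + ·) ⁻¹' s) := by
  show ((walk ρ n).bind fun x => ρ.map (x + ·)).toMeasure s = _
  rw [PMF.toMeasure_bind_apply _ _ _ (meas s)]
  exact tsum_congr fun x => by
    rw [PMF.toMeasure_map_apply _ _ _ (measf _) (meas s)]

lemma tsum_translate {M : ℕ} (x : Omega M) (f : Omega M → ℝ≥0∞) :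
    ∑' u, f (u + x) = ∑' u, f u :=
  (Equiv.addRight x).tsum_eq f

section walkbounds

variable {M L : ℕ} (ρ : PMF (Omega M))

lemma walkQ (n : ℕ) :
    (ρ.toMeasure {y : Omega M | hnorm y ≤ L}) ^ n
      ≤ (walk ρ n).toMeasure {y : Omega M | hnorm y ≤ L} := by
  set B : Set (Omega M) := {y | hnorm y ≤ L} with hB
  set q := ρ.toMeasure B with hq
  induction n with
  | zero =>
    show q ^ 0 ≤ (PMF.pure 0).toMeasure B
    rw [PMF.toMeasure_pure_apply _ _ (meas B)]
    have : (0 : Omega M) ∈ B := by simp [hB, Set.mem_setOf_eq, hnorm_zero]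
    simp [this]
  | succ n ih =>
    rw [walk_succ_measure]
    have hstep : ∀ x : Omega M,
        (if hnorm x ≤ L then (walk ρ n) x * q else 0)
          ≤ (walk ρ n) x * ρ.toMeasure ((x + ·) ⁻¹' B) := by
      intro x
      by_cases h : hnorm x ≤ L
      · have hset : (x + ·) ⁻¹' B = B := Set.ext fun y => hnorm_add_iff h y
        rw [if_pos h, hset]
      · rw [if_neg h]; exact zero_le
    have heq : (walk ρ n).toMeasure B * q
        = ∑' x, (if hnorm x ≤ L then (walk ρ n) x * q else 0) := by
      rw [pmf_meas, ← ENNReal.tsum_mul_right]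
      exact tsum_congr fun x => by
        by_cases h : hnorm x ≤ L <;> simp [hB, Set.mem_setOf_eq, h]
    calc q ^ (n + 1) = q ^ n * q := pow_succ q n
      _ ≤ (walk ρ n).toMeasure B * q := mul_le_mul_left ih q
      _ = ∑' x, (if hnorm x ≤ L then (walk ρ n) x * q else 0) := heq
      _ ≤ _ := Summable.tsum_le_tsum hstep ENNReal.summable ENNReal.summable

lemma walkR (n : ℕ) :
    (n : ℝ≥0∞) * ρ.toMeasure {y : Omega M | L < hnorm y}
        * (ρ.toMeasure {y : Omega M | hnorm y ≤ L}) ^ (n - 1)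
      ≤ (walk ρ n).toMeasure {y : Omega M | L < hnorm y} := by
  set B : Set (Omega M) := {y | hnorm y ≤ L} with hB
  set C : Set (Omega M) := {y | L < hnorm y} with hC
  set q := ρ.toMeasure B with hq
  set t := ρ.toMeasure C with ht
  induction n with
  | zero => simp
  | succ n ih =>
    rw [walk_succ_measure]
    have hstep : ∀ x : Omega M,
        (if hnorm x ≤ L then (walk ρ n) x * t else (walk ρ n) x * q)
          ≤ (walk ρ n) x * ρ.toMeasure ((x + ·) ⁻¹' C) := by
      intro x
      by_cases h : hnorm x ≤ L
      · have hset : (x + ·) ⁻¹' C = C := Set.ext fun y => by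
          simp only [Set.mem_preimage, hC, Set.mem_setOf_eq, ← not_le]
          exact not_congr (hnorm_add_iff h y)
        rw [if_pos h, hset]
      · rw [if_neg h]
        have hsub : B ⊆ (x + ·) ⁻¹' C := fun y hy => hnorm_add_big hy (not_le.1 h)
        exact mul_le_mul_right (measure_mono hsub) _
    have h1 : (walk ρ n).toMeasure B * t
        = ∑' x, (if hnorm x ≤ L then (walk ρ n) x * t else 0) := by
      rw [pmf_meas, ← ENNReal.tsum_mul_right]
      exact tsum_congr fun x => by
        by_cases h : hnorm x ≤ L <;> simp [hB, Set.mem_setOf_eq, h]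
    have h2 : (walk ρ n).toMeasure C * q
        = ∑' x, (if hnorm x ≤ L then 0 else (walk ρ n) x * q) := by
      rw [pmf_meas, ← ENNReal.tsum_mul_right]
      exact tsum_congr fun x => by
        by_cases h : hnorm x ≤ L <;> simp [hC, Set.mem_setOf_eq, h, not_le.1, not_le]
    have hsplit : (walk ρ n).toMeasure B * t + (walk ρ n).toMeasure C * q
        = ∑' x, (if hnorm x ≤ L then (walk ρ n) x * t else (walk ρ n) x * q) := by
      rw [h1, h2, ← ENNReal.tsum_add]
      exact tsum_congr fun x => by by_cases h : hnorm x ≤ L <;> simp [h]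
    have hQ : q ^ n ≤ (walk ρ n).toMeasure B := walkQ ρ n
    have key : ((n : ℝ≥0∞) + 1) * t * q ^ n
        ≤ (walk ρ n).toMeasure B * t + (walk ρ n).toMeasure C * q := by
      have e1 : ((n : ℝ≥0∞) + 1) * t * q ^ n = t * q ^ n + (n : ℝ≥0∞) * t * q ^ n := by
        ring
      rw [e1]
      have hA : t * q ^ n ≤ (walk ρ n).toMeasure B * t := by
        rw [mul_comm]
        exact mul_le_mul_left hQ t
      have hB2 : (n : ℝ≥0∞) * t * q ^ n ≤ (walk ρ n).toMeasure C * q := by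
        cases n with
        | zero => simp
        | succ m =>
          have : ((m + 1 : ℕ) : ℝ≥0∞) * t * q ^ (m + 1)
              = ((m + 1 : ℕ) : ℝ≥0∞) * t * q ^ (m + 1 - 1) * q := by
            rw [Nat.add_sub_cancel, pow_succ]; ring
          rw [this]
          exact mul_le_mul_left ih q
      exact add_le_add hA hB2
    calc ((n + 1 : ℕ) : ℝ≥0∞) * t * q ^ (n + 1 - 1)
        = ((n : ℝ≥0∞) + 1) * t * q ^ n := by push_cast [Nat.add_sub_cancel]; ring
      _ ≤ (walk ρ n).toMeasure B * t + (walk ρ n).toMeasure C * q := key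
      _ = ∑' x, (if hnorm x ≤ L then (walk ρ n) x * t else (walk ρ n) x * q) := hsplit
      _ ≤ _ := Summable.tsum_le_tsum hstep ENNReal.summable ENNReal.summable

end walkbounds

/-- Two-sided bound for the number variance:
`P(|ρ| ≤ L)^{2n-1} · n · P(|ρ| > L) · M^L ≤ Var N_n(L) ≤ 2 M^L`. -/
theorem number_variance_bounds (M : ℕ) (hM : 2 ≤ M) (r : ℕ → ℝ≥0∞)
    (hr : ∑' j : ℕ, r (j + 1) = 1)
    (ρ : PMF (Omega M)) (hρ0 : ρ 0 = 0)
    (hρ : ∀ y : Omega M, y ≠ 0 →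
      ρ y = r (hnorm y) / ((M : ℝ≥0∞) ^ (hnorm y - 1) * ((M : ℝ≥0∞) - 1)))
    (n L : ℕ) :
    (ρ.toMeasure {y : Omega M | hnorm y ≤ L}) ^ (2 * n - 1) * (n : ℝ≥0∞) *
        ρ.toMeasure {y : Omega M | L < hnorm y} * (M : ℝ≥0∞) ^ L ≤
      (∑' u : Omega M,
        (walk ρ n).toMeasure {x : Omega M | hnorm (u + x) ≤ L} *
          (1 - (walk ρ n).toMeasure {x : Omega M | hnorm (u + x) ≤ L})) ∧
    (∑' u : Omega M,
        (walk ρ n).toMeasure {x : Omega M | hnorm (u + x) ≤ L} *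
          (1 - (walk ρ n).toMeasure {x : Omega M | hnorm (u + x) ≤ L})) ≤
      2 * (M : ℝ≥0∞) ^ L := by
  have hpu : ∀ u : Omega M, hnorm u ≤ L →
      {x : Omega M | hnorm (u + x) ≤ L} = {y : Omega M | hnorm y ≤ L} :=
    fun u hu => Set.ext fun x => hnorm_add_iff hu x
  constructor
  · -- lower bound
    set B : Set (Omega M) := {y | hnorm y ≤ L} with hBdef
    set q := ρ.toMeasure B with hq
    set t := ρ.toMeasure {y : Omega M | L < hnorm y} with ht
    rcases Nat.eq_zero_or_pos n with hn | hn
    · subst hn; simp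
    set Q := (walk ρ n).toMeasure B with hQdef
    have hQ : q ^ n ≤ Q := walkQ ρ n
    have hR : (n : ℝ≥0∞) * t * q ^ (n - 1)
        ≤ (walk ρ n).toMeasure {y : Omega M | L < hnorm y} := walkR ρ n
    have hcompl : (walk ρ n).toMeasure {y : Omega M | L < hnorm y} = 1 - Q := by
      have hset : {y : Omega M | L < hnorm y} = Bᶜ := Set.ext fun y => by
        simp [hBdef, Set.mem_setOf_eq, not_le]
      rw [hset, measure_compl (meas B) (measure_ne_top _ _), measure_univ]
    have hR' : (n : ℝ≥0∞) * t * q ^ (n - 1) ≤ 1 - Q := hcompl ▸ hR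
    have stepA : q ^ (2 * n - 1) * (n : ℝ≥0∞) * t ≤ Q * (1 - Q) := by
      have h2n : 2 * n - 1 = n + (n - 1) := by omega
      calc q ^ (2 * n - 1) * (n : ℝ≥0∞) * t
          = q ^ n * ((n : ℝ≥0∞) * t * q ^ (n - 1)) := by
            rw [h2n, pow_add]; ring
        _ ≤ Q * (1 - Q) := mul_le_mul' hQ hR'
    have stepB : Q * (1 - Q) * (M : ℝ≥0∞) ^ L
        ≤ ∑' u : Omega M,
            (walk ρ n).toMeasure {x : Omega M | hnorm (u + x) ≤ L} *
              (1 - (walk ρ n).toMeasure {x : Omega M | hnorm (u + x) ≤ L}) := by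
      have hc : Q * (1 - Q) * (M : ℝ≥0∞) ^ L
          = ∑' u : Omega M, (if hnorm u ≤ L then Q * (1 - Q) else 0) := by
        rw [← card_key (L := L) hM, ← ENNReal.tsum_mul_left]
        exact tsum_congr fun u => by by_cases h : hnorm u ≤ L <;> simp [h]
      rw [hc]
      refine Summable.tsum_le_tsum (fun u => ?_) ENNReal.summable ENNReal.summable
      by_cases h : hnorm u ≤ L
      · rw [if_pos h, hpu u h]
      · rw [if_neg h]; exact zero_le
    calc q ^ (2 * n - 1) * (n : ℝ≥0∞) * t * (M : ℝ≥0∞) ^ L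
        ≤ Q * (1 - Q) * (M : ℝ≥0∞) ^ L := mul_le_mul_left stepA _
      _ ≤ _ := stepB
  · -- upper bound
    have h1 : (∑' u : Omega M,
        (walk ρ n).toMeasure {x : Omega M | hnorm (u + x) ≤ L} *
          (1 - (walk ρ n).toMeasure {x : Omega M | hnorm (u + x) ≤ L}))
        ≤ ∑' u : Omega M, (walk ρ n).toMeasure {x : Omega M | hnorm (u + x) ≤ L} :=
      Summable.tsum_le_tsum (fun u => by
        calc (walk ρ n).toMeasure {x : Omega M | hnorm (u + x) ≤ L} *
              (1 - (walk ρ n).toMeasure {x : Omega M | hnorm (u + x) ≤ L})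
            ≤ (walk ρ n).toMeasure {x : Omega M | hnorm (u + x) ≤ L} * 1 :=
              mul_le_mul_right tsub_le_self _
          _ = _ := mul_one _) ENNReal.summable ENNReal.summable
    have h2 : (∑' u : Omega M, (walk ρ n).toMeasure {x : Omega M | hnorm (u + x) ≤ L})
        = (M : ℝ≥0∞) ^ L := by
      have hrw : ∀ u : Omega M, (walk ρ n).toMeasure {x : Omega M | hnorm (u + x) ≤ L}
          = ∑' x, if hnorm (u + x) ≤ L then (walk ρ n) x else 0 := fun u => by
        rw [pmf_meas]
        exact tsum_congr fun x => by
          by_cases h : hnorm (u + x) ≤ L <;> simp [Set.mem_setOf_eq, h]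
      calc ∑' u : Omega M, (walk ρ n).toMeasure {x : Omega M | hnorm (u + x) ≤ L}
          = ∑' u, ∑' x, (if hnorm (u + x) ≤ L then (walk ρ n) x else 0) :=
            tsum_congr hrw
        _ = ∑' x, ∑' u, (if hnorm (u + x) ≤ L then (walk ρ n) x else 0) :=
            ENNReal.tsum_comm
        _ = ∑' x, (walk ρ n) x * (M : ℝ≥0∞) ^ L := by
            refine tsum_congr fun x => ?_
            have := tsum_translate x (fun w => if hnorm w ≤ L then (walk ρ n) x else 0)
            rw [this, ← card_key (L := L) hM, ← ENNReal.tsum_mul_left]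
            exact tsum_congr fun w => by by_cases h : hnorm w ≤ L <;> simp [h]
        _ = (M : ℝ≥0∞) ^ L := by
            rw [ENNReal.tsum_mul_right, PMF.tsum_coe, one_mul]
    rw [h2] at h1
    exact h1.trans (le_mul_of_one_le_left zero_le one_le_two)
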